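/- Let D ∈ ℝ^{r×r} be diagonal and V ∈ ℝ^{m×r} have orthonormal columns. Then V D² V* + I_m is invertible and for every e ∈ ℝ^m, e* (V D² V* + I)^{-1} e = ‖e‖² − e* V D (D² + I)^{-1} D V* e. -/

import Mathlib

open Matrix BigOperators

/-- If `D` is diagonal with nonnegative entries and `V` has orthonormal columns, then
`V D² Vᵀ + I` is invertible and the quadratic form of its inverse satisfies
`eᵀ (V D² Vᵀ + I)⁻¹ e = ‖e‖² − eᵀ V D (D² + I)⁻¹ D Vᵀ e`. -/
theorem quadform_inv_add_one {m r : ℕ}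
    (V : Matrix (Fin m) (Fin r) ℝ) (D : Matrix (Fin r) (Fin r) ℝ)
    (hV : Vᵀ * V = 1) (hD : D.IsDiag) (hDpos : ∀ k, 0 ≤ D k k) (e : Fin m → ℝ) :
    IsUnit (V * D ^ 2 * Vᵀ + 1).det ∧
      e ⬝ᵥ (V * D ^ 2 * Vᵀ + 1)⁻¹ *ᵥ e =
        e ⬝ᵥ e - e ⬝ᵥ (V * D * (D ^ 2 + 1)⁻¹ * D * Vᵀ) *ᵥ e := by
  set d : Fin r → ℝ := fun k => D k k with hdd
  have hd : D = Matrix.diagonal d := by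
    ext i j
    rcases eq_or_ne i j with h | h
    · subst h; simp [Matrix.diagonal, d]
    · simp [Matrix.diagonal_apply_ne _ h, hD h]
  set f : Fin r → ℝ := fun k => d k ^ 2 + 1 with hff
  have hf : ∀ k, f k ≠ 0 := fun k => by positivity
  have hDsq : D ^ 2 + 1 = Matrix.diagonal f := by
    rw [hd, pow_two, Matrix.diagonal_mul_diagonal, ← Matrix.diagonal_one,
      Matrix.diagonal_add]
    congr 1
    funext k
    simp [f, pow_two]
  have hCinv : (D ^ 2 + 1)⁻¹ = Matrix.diagonal fun k => (f k)⁻¹ := by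
    rw [hDsq]
    apply Matrix.inv_eq_right_inv
    rw [Matrix.diagonal_mul_diagonal]
    have : (fun k => f k * (f k)⁻¹) = fun _ => (1 : ℝ) :=
      funext fun k => mul_inv_cancel₀ (hf k)
    rw [this, Matrix.diagonal_one]
  set C : Matrix (Fin r) (Fin r) ℝ := Matrix.diagonal fun k => (f k)⁻¹ with hC
  set Dg : Matrix (Fin r) (Fin r) ℝ := Matrix.diagonal d with hDg
  have hmid : Dg ^ 2 * (Dg * C * Dg) + Dg * C * Dg = Dg ^ 2 := by
    rw [hDg, hC, pow_two]
    simp only [Matrix.diagonal_mul_diagonal]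
    rw [Matrix.diagonal_add]
    ext i j
    rcases eq_or_ne i j with h | h
    · subst h
      simp only [Matrix.diagonal_apply_eq]
      have h1 : d i ^ 2 + 1 ≠ 0 := hf i
      simp only [f]
      field_simp
    · simp [Matrix.diagonal_apply_ne _ h]
  have hM : V * D * (D ^ 2 + 1)⁻¹ * D * Vᵀ = V * (Dg * C * Dg) * Vᵀ := by
    rw [hCinv, hd, hDg, hC]
    simp only [Matrix.mul_assoc]
  have key : (V * D ^ 2 * Vᵀ + 1) * (1 - V * D * (D ^ 2 + 1)⁻¹ * D * Vᵀ) = 1 := by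
    rw [hM, hd]
    have hAM : V * Matrix.diagonal d ^ 2 * Vᵀ * (V * (Dg * C * Dg) * Vᵀ)
        = V * (Dg ^ 2 * (Dg * C * Dg)) * Vᵀ := by
      rw [hDg]
      calc V * Matrix.diagonal d ^ 2 * Vᵀ * (V * (Matrix.diagonal d * C * Matrix.diagonal d) * Vᵀ)
          = V * Matrix.diagonal d ^ 2 * ((Vᵀ * V) * ((Matrix.diagonal d * C * Matrix.diagonal d) * Vᵀ)) := by
            simp only [Matrix.mul_assoc]
        _ = V * (Matrix.diagonal d ^ 2 * (Matrix.diagonal d * C * Matrix.diagonal d)) * Vᵀ := by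
            rw [hV, Matrix.one_mul]; simp only [Matrix.mul_assoc]
    have expand : (V * Matrix.diagonal d ^ 2 * Vᵀ + 1) * (1 - V * (Dg * C * Dg) * Vᵀ)
        = V * Matrix.diagonal d ^ 2 * Vᵀ + 1
          - (V * Matrix.diagonal d ^ 2 * Vᵀ * (V * (Dg * C * Dg) * Vᵀ) + V * (Dg * C * Dg) * Vᵀ) := by
      noncomm_ring
    rw [expand, hAM]
    have : V * (Dg ^ 2 * (Dg * C * Dg)) * Vᵀ + V * (Dg * C * Dg) * Vᵀ
        = V * (Dg ^ 2 * (Dg * C * Dg) + Dg * C * Dg) * Vᵀ := by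
      rw [Matrix.mul_add, Matrix.add_mul]
    rw [this, hmid, hDg]
    abel
  have hdet : IsUnit (V * D ^ 2 * Vᵀ + 1).det :=
    Matrix.isUnit_det_of_right_inverse key
  refine ⟨hdet, ?_⟩
  rw [Matrix.inv_eq_right_inv key, Matrix.sub_mulVec, Matrix.one_mulVec,
    dotProduct_sub]
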